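/- The piecewise switching function q(S,I) defined by q = 1 if S ≥ S̃̃ and I ≥ Ĩ̃; q = (4/π)·arctan((I - Ĩ)/(Ĩ̃ - Ĩ)) if I ≤ ((Ĩ̃-Ĩ)/(S̃̃-S̃))(S - S̃) + Ĩ and I < Ĩ̃; and q = (4/π)·arctan((S - S̃)/(S̃̃ - S̃)) otherwise, is Lipschitz on [S̃, N] × [Ĩ, N] with constant max{4/(π(Ĩ̃-Ĩ)), 4/(π(S̃̃-S̃))}. -/

import Mathlib

open Real

lemma arctan_abs_sub (x y : ℝ) : |Real.arctan x - Real.arctan y| ≤ |x - y| := by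
  have lip : LipschitzWith 1 Real.arctan := by
    apply lipschitzWith_of_nnnorm_deriv_le Real.differentiable_arctan
    intro x
    rw [Real.deriv_arctan, ← NNReal.coe_le_coe, coe_nnnorm, Real.norm_eq_abs, NNReal.coe_one,
      abs_of_nonneg (by positivity), div_le_one (by positivity)]
    nlinarith [sq_nonneg x]
  have := lip.dist_le_mul x y
  rwa [NNReal.coe_one, one_mul, Real.dist_eq, Real.dist_eq] at this

/-- the piecewise switching function q is Lipschitz on the
rectangle [S̃, N] × [Ĩ, N] with constant max{4/(π(Ĩ̃-Ĩ)), 4/(π(S̃̃-S̃))}. -/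
theorem switching_function_lipschitz
    (Stil Sttil Itil Ittil N : ℝ)
    (hS : Stil < Sttil) (hSN : Sttil ≤ N)
    (hI : Itil < Ittil) (hIN : Ittil ≤ N)
    (q : ℝ × ℝ → ℝ)
    (hq : ∀ z : ℝ × ℝ, q z =
      if Sttil ≤ z.1 ∧ Ittil ≤ z.2 then 1
      else if z.2 ≤ (Ittil - Itil) / (Sttil - Stil) * (z.1 - Stil) + Itil
              ∧ z.2 < Ittil then
        (4 / π) * arctan ((z.2 - Itil) / (Ittil - Itil))
      else (4 / π) * arctan ((z.1 - Stil) / (Sttil - Stil))) :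
    ∀ z ∈ Set.Icc (Stil, Itil) (N, N), ∀ z' ∈ Set.Icc (Stil, Itil) (N, N),
      |q z - q z'| ≤
        max (4 / (π * (Ittil - Itil))) (4 / (π * (Sttil - Stil))) * dist z z' := by
  have hπ := Real.pi_pos
  have hSd : (0:ℝ) < Sttil - Stil := sub_pos.2 hS
  have hId : (0:ℝ) < Ittil - Itil := sub_pos.2 hI
  have h4π : (0:ℝ) < 4 / π := by positivity
  have hone : (4 / π) * Real.arctan 1 = 1 := by
    rw [Real.arctan_one]; field_simp
  set A : ℝ → ℝ := fun s => (4 / π) * Real.arctan ((s - Stil) / (Sttil - Stil)) with hA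
  set B : ℝ → ℝ := fun i => (4 / π) * Real.arctan ((i - Itil) / (Ittil - Itil)) with hB
  have mono := Real.arctan_strictMono.monotone
  have key : ∀ z : ℝ × ℝ, q z = min 1 (min (A z.1) (B z.2)) := by
    intro z
    rw [hq]
    split_ifs with h1 h2
    · have hA1 : 1 ≤ A z.1 := by
        rw [← hone]
        exact mul_le_mul_of_nonneg_left (mono ((one_le_div hSd).2 (by linarith [h1.1]))) h4π.le
      have hB1 : 1 ≤ B z.2 := by
        rw [← hone]
        exact mul_le_mul_of_nonneg_left (mono ((one_le_div hId).2 (by linarith [h1.2]))) h4π.le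
      rw [min_eq_left (le_min hA1 hB1)]
    · have harg : (z.2 - Itil) / (Ittil - Itil) ≤ (z.1 - Stil) / (Sttil - Stil) := by
        rw [div_le_div_iff₀ hId hSd]
        have h := h2.1
        rw [div_mul_eq_mul_div, ← sub_le_iff_le_add, le_div_iff₀ hSd] at h
        nlinarith [h]
      have hBA : B z.2 ≤ A z.1 :=
        mul_le_mul_of_nonneg_left (mono harg) h4π.le
      have hB1 : B z.2 ≤ 1 := by
        rw [← hone]
        exact mul_le_mul_of_nonneg_left (mono ((div_le_one hId).2 (by linarith [h2.2]))) h4π.le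
      rw [min_eq_right hBA, min_eq_right hB1]
    · by_cases hi : Ittil ≤ z.2
      · have hs : z.1 < Sttil := by
          by_contra hs
          exact h1 ⟨le_of_not_gt hs, hi⟩
        have hA1 : A z.1 ≤ 1 := by
          rw [← hone]
          exact mul_le_mul_of_nonneg_left (mono ((div_le_one hSd).2 (by linarith))) h4π.le
        have hB1 : 1 ≤ B z.2 := by
          rw [← hone]
          exact mul_le_mul_of_nonneg_left (mono ((one_le_div hId).2 (by linarith))) h4π.le
        rw [min_eq_left (hA1.trans hB1), min_eq_right hA1]
      · push_neg at hi
        have hline : (Ittil - Itil) / (Sttil - Stil) * (z.1 - Stil) + Itil < z.2 := by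
          by_contra h
          exact h2 ⟨le_of_not_gt h, hi⟩
        have hs : z.1 ≤ Sttil := by
          by_contra hs
          push_neg at hs
          have : Ittil - Itil < (Ittil - Itil) / (Sttil - Stil) * (z.1 - Stil) := by
            rw [div_mul_eq_mul_div, lt_div_iff₀ hSd]
            nlinarith
          linarith
        have harg : (z.1 - Stil) / (Sttil - Stil) ≤ (z.2 - Itil) / (Ittil - Itil) := by
          rw [div_le_div_iff₀ hSd hId]
          rw [div_mul_eq_mul_div] at hline
          have h0 : (Ittil - Itil) * (z.1 - Stil) / (Sttil - Stil) < z.2 - Itil := by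
            linarith
          rw [div_lt_iff₀ hSd] at h0
          nlinarith [h0]
        have hAB : A z.1 ≤ B z.2 :=
          mul_le_mul_of_nonneg_left (mono harg) h4π.le
        have hA1 : A z.1 ≤ 1 := by
          rw [← hone]
          exact mul_le_mul_of_nonneg_left (mono ((div_le_one hSd).2 (by linarith))) h4π.le
        rw [min_eq_left hAB, min_eq_right hA1]
  intro z _ z' _
  rw [key z, key z']
  have hAlip : |A z.1 - A z'.1| ≤ 4 / (π * (Sttil - Stil)) * |z.1 - z'.1| := by
    simp only [hA]
    rw [← mul_sub, abs_mul, abs_of_nonneg h4π.le]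
    calc 4 / π * |Real.arctan ((z.1 - Stil) / (Sttil - Stil)) -
            Real.arctan ((z'.1 - Stil) / (Sttil - Stil))|
        ≤ 4 / π * |(z.1 - Stil) / (Sttil - Stil) - (z'.1 - Stil) / (Sttil - Stil)| :=
          mul_le_mul_of_nonneg_left (arctan_abs_sub _ _) h4π.le
      _ = 4 / (π * (Sttil - Stil)) * |z.1 - z'.1| := by
          rw [div_sub_div_same, abs_div, abs_of_nonneg hSd.le]
          ring_nf
          field_simp
  have hBlip : |B z.2 - B z'.2| ≤ 4 / (π * (Ittil - Itil)) * |z.2 - z'.2| := by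
    simp only [hB]
    rw [← mul_sub, abs_mul, abs_of_nonneg h4π.le]
    calc 4 / π * |Real.arctan ((z.2 - Itil) / (Ittil - Itil)) -
            Real.arctan ((z'.2 - Itil) / (Ittil - Itil))|
        ≤ 4 / π * |(z.2 - Itil) / (Ittil - Itil) - (z'.2 - Itil) / (Ittil - Itil)| :=
          mul_le_mul_of_nonneg_left (arctan_abs_sub _ _) h4π.le
      _ = 4 / (π * (Ittil - Itil)) * |z.2 - z'.2| := by
          rw [div_sub_div_same, abs_div, abs_of_nonneg hId.le]
          ring_nf
          field_simp
  set K := max (4 / (π * (Ittil - Itil))) (4 / (π * (Sttil - Stil))) with hK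
  have hdist : dist z z' = max |z.1 - z'.1| |z.2 - z'.2| := by
    rw [Prod.dist_eq, Real.dist_eq, Real.dist_eq]
  calc |min 1 (min (A z.1) (B z.2)) - min 1 (min (A z'.1) (B z'.2))|
      ≤ max |(1:ℝ) - 1| |min (A z.1) (B z.2) - min (A z'.1) (B z'.2)| :=
        abs_min_sub_min_le_max _ _ _ _
    _ = |min (A z.1) (B z.2) - min (A z'.1) (B z'.2)| := by simp
    _ ≤ max |A z.1 - A z'.1| |B z.2 - B z'.2| := abs_min_sub_min_le_max _ _ _ _
    _ ≤ max (4 / (π * (Sttil - Stil)) * |z.1 - z'.1|)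
          (4 / (π * (Ittil - Itil)) * |z.2 - z'.2|) := max_le_max hAlip hBlip
    _ ≤ K * dist z z' := by
        rw [hdist]
        apply max_le
        · exact mul_le_mul (le_max_right _ _) (le_max_left _ _) (abs_nonneg _)
            (le_trans (by positivity) (le_max_left _ _))
        · exact mul_le_mul (le_max_left _ _) (le_max_right _ _) (abs_nonneg _)
            (le_trans (by positivity) (le_max_left _ _))
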